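/- Let P be a finite collection of cells and L_P = ker ψ where ψ: S → T is the natural map to the toric (Laurent) ring in the free-vertex variables. If a binomial f_{a,b} = x_a x_b − x_c x_d attached to a proper interval [a,b] with anti-diagonal corners c, d lies in L_P, then [a,b] is an inner interval of P. -/

import Mathlib

open scoped BigOperators

abbrev Cell : Type := ℕ × ℕ

/-- The four corners of the unit cell with lower left corner `a`. -/
def cellVerts (a : Cell) : Finset (ℕ × ℕ) :=
  {a, (a.1 + 1, a.2), (a.1, a.2 + 1), (a.1 + 1, a.2 + 1)}

/-- The vertex set of a collection of cells. -/
def verts (P : Finset Cell) : Finset (ℕ × ℕ) := P.biUnion cellVerts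

/-- Row convexity of a collection of cells. -/
def RowConvex (P : Finset Cell) : Prop :=
  ∀ a ∈ P, ∀ b ∈ P, a.2 = b.2 → ∀ r : ℕ, a.1 ≤ r → r ≤ b.1 → (r, a.2) ∈ P

/-- Column convexity of a collection of cells. -/
def ColConvex (P : Finset Cell) : Prop :=
  ∀ a ∈ P, ∀ b ∈ P, a.1 = b.1 → ∀ s : ℕ, a.2 ≤ s → s ≤ b.2 → (a.1, s) ∈ P

/-- A collection of cells is convex if it is row and column convex. -/
def IsConvexColl (P : Finset Cell) : Prop := RowConvex P ∧ ColConvex P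

/-- Weak connectedness: any two cells are joined by a sequence of cells of `P`
in which consecutive cells share at least one vertex. -/
def WeaklyConnected (P : Finset Cell) : Prop :=
  ∀ a ∈ P, ∀ b ∈ P,
    Relation.ReflTransGen
      (fun c d => c ∈ P ∧ d ∈ P ∧ (cellVerts c ∩ cellVerts d).Nonempty) a b

/-- Two cells share an edge. -/
def edgeAdj (a b : Cell) : Prop :=
  (a.1 = b.1 ∧ (a.2 + 1 = b.2 ∨ b.2 + 1 = a.2)) ∨
  (a.2 = b.2 ∧ (a.1 + 1 = b.1 ∨ b.1 + 1 = a.1))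

/-- Connectedness: any two cells are joined by an edge-sharing path of cells of `P`. -/
def ConnectedColl (P : Finset Cell) : Prop :=
  ∀ a ∈ P, ∀ b ∈ P,
    Relation.ReflTransGen (fun c d => c ∈ P ∧ d ∈ P ∧ edgeAdj c d) a b

/-- `Q` is a connected component of `P`. -/
def IsComponent (P Q : Finset Cell) : Prop :=
  Q ⊆ P ∧ Q.Nonempty ∧ ConnectedColl Q ∧
    ∀ R : Finset Cell, Q ⊆ R → R ⊆ P → ConnectedColl R → R = Q

/-- The cell `c` belongs to the interval `[a,b]`. -/
def cellInBox (a b : ℕ × ℕ) (c : Cell) : Prop :=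
  a.1 ≤ c.1 ∧ c.1 + 1 ≤ b.1 ∧ a.2 ≤ c.2 ∧ c.2 + 1 ≤ b.2

/-- `c` is a border cell of the interval `[a,b]`. -/
def borderCell (a b : ℕ × ℕ) (c : Cell) : Prop :=
  cellInBox a b c ∧ (c.1 = a.1 ∨ c.1 + 1 = b.1 ∨ c.2 = a.2 ∨ c.2 + 1 = b.2)

/-- A collection of cells is simple (has no holes). -/
def SimpleColl (P : Finset Cell) : Prop :=
  ∀ a b : ℕ × ℕ, a.1 < b.1 → a.2 < b.2 →
    (∀ v ∈ verts P, a.1 < v.1 ∧ v.1 < b.1 ∧ a.2 < v.2 ∧ v.2 < b.2) →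
    ∀ c : Cell, cellInBox a b c → c ∉ P →
      ∃ d : Cell, borderCell a b d ∧
        Relation.ReflTransGen
          (fun u v => cellInBox a b u ∧ cellInBox a b v ∧ u ∉ P ∧ v ∉ P ∧ edgeAdj u v) c d

/-- `[a,b]` is an inner interval of `P`: it is proper and all of its cells belong to `P`. -/
def InnerInterval (P : Finset Cell) (a b : ℕ × ℕ) : Prop :=
  a.1 < b.1 ∧ a.2 < b.2 ∧
    ∀ r s : ℕ, a.1 ≤ r → r < b.1 → a.2 ≤ s → s < b.2 → (r, s) ∈ P

/-- The set of inner 2-minors of `P`. -/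
def innerMinors (K : Type*) [Field K] (P : Finset Cell) :
    Set (MvPolynomial {v : ℕ × ℕ // v ∈ verts P} K) :=
  { f | ∃ a b c d : {v : ℕ × ℕ // v ∈ verts P},
      InnerInterval P a.1 b.1 ∧ c.1 = (b.1.1, a.1.2) ∧ d.1 = (a.1.1, b.1.2) ∧
      f = MvPolynomial.X a * MvPolynomial.X b - MvPolynomial.X c * MvPolynomial.X d }

/-- The ideal of inner 2-minors of `P`. -/
noncomputable def innerIdeal (K : Type*) [Field K] (P : Finset Cell) :
    Ideal (MvPolynomial {v : ℕ × ℕ // v ∈ verts P} K) :=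
  Ideal.span (innerMinors K P)

/-- A vertex of `P` is free if it is not the lower left corner of any cell of `P`. -/
def freeVert (P : Finset Cell) (v : ℕ × ℕ) : Prop := v ∈ verts P ∧ v ∉ P

/-- The Laurent polynomial ring in the variables `y_c`, `c` a free vertex of `P`. -/
abbrev LaurentRing (K : Type*) [Field K] (P : Finset Cell) : Type _ :=
  AddMonoidAlgebra K ({v : ℕ × ℕ // freeVert P v} →₀ ℤ)

/-- `ψ` is the natural map `S → T`: it sends `x_a` to `y_a` for free vertices `a`, and
satisfies `ψ(x_a) ψ(x_d) = ψ(x_b) ψ(x_c)` whenever `a` is the lower left corner of a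
cell of `P` with remaining vertices `b, c, d` (equivalently `ψ(x_a)=ψ(x_b)ψ(x_c)ψ(x_d)⁻¹`).
These two conditions determine `ψ` uniquely. -/
def psiSpec (K : Type*) [Field K] (P : Finset Cell)
    (ψ : MvPolynomial {v : ℕ × ℕ // v ∈ verts P} K →ₐ[K] LaurentRing K P) : Prop :=
  (∀ v : {v : ℕ × ℕ // v ∈ verts P}, ∀ h : freeVert P v.1,
      ψ (MvPolynomial.X v) = AddMonoidAlgebra.of' K _ (Finsupp.single ⟨v.1, h⟩ 1)) ∧
  (∀ a b c d : {v : ℕ × ℕ // v ∈ verts P}, a.1 ∈ P →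
      b.1 = (a.1.1 + 1, a.1.2) → c.1 = (a.1.1, a.1.2 + 1) → d.1 = (a.1.1 + 1, a.1.2 + 1) →
      ψ (MvPolynomial.X a) * ψ (MvPolynomial.X d) =
        ψ (MvPolynomial.X b) * ψ (MvPolynomial.X c))

/-- If the binomial `f_{a,b} = x_a x_b - x_c x_d` attached to a proper
interval `[a,b]` lies in `L_P = ker ψ`, then `[a,b]` is an inner interval of `P`. -/
theorem inner_interval_of_mem_LP (K : Type*) [Field K] (P : Finset Cell)
    (ψ : MvPolynomial {v : ℕ × ℕ // v ∈ verts P} K →ₐ[K] LaurentRing K P)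
    (hψ : psiSpec K P ψ)
    (a b c d : {v : ℕ × ℕ // v ∈ verts P})
    (h1 : a.1.1 < b.1.1) (h2 : a.1.2 < b.1.2)
    (hc : c.1 = (b.1.1, a.1.2)) (hd : d.1 = (a.1.1, b.1.2))
    (hker : MvPolynomial.X a * MvPolynomial.X b - MvPolynomial.X c * MvPolynomial.X d ∈
      RingHom.ker ψ.toRingHom) :
    InnerInterval P a.1 b.1 := by
  classical
  obtain ⟨hfree, hcellrel⟩ := hψ
  refine ⟨h1, h2, ?_⟩
  intro r s hr1 hr2 hs1 hs2
  by_contra hrs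
  set W : ℕ × ℕ → ℤ := fun v => if r < v.1 ∧ s < v.2 then 1 else 0 with hWdef
  have hWcell : ∀ p : Cell, p ∈ P →
      W p + W (p.1 + 1, p.2 + 1) = W (p.1 + 1, p.2) + W (p.1, p.2 + 1) := by
    intro p hp
    have hne : ¬ (p.1 = r ∧ p.2 = s) := by
      rintro ⟨e1, e2⟩
      exact hrs (by rw [← e1, ← e2]; exact hp)
    simp only [hWdef]
    split_ifs <;> omega
  set χ : ({v : ℕ × ℕ // freeVert P v} →₀ ℤ) →+ ℤ :=
    Finsupp.liftAddHom (fun v => AddMonoidHom.mulRight (W v.1)) with hχdef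
  have hχ : ∀ (v : {v : ℕ × ℕ // freeVert P v}), χ (Finsupp.single v 1) = W v.1 := by
    intro v
    simp [hχdef]
  set Φ : LaurentRing K P →ₐ[K] AddMonoidAlgebra K ℤ :=
    AddMonoidAlgebra.mapDomainAlgHom K K χ with hΦdef
  have hΦs : ∀ (m : {v : ℕ × ℕ // freeVert P v} →₀ ℤ),
      Φ (AddMonoidAlgebra.single m (1 : K)) = AddMonoidAlgebra.single (χ m) (1 : K) := by
    intro m
    simp [hΦdef, AddMonoidAlgebra.mapDomainAlgHom_apply, Finsupp.mapDomain_single]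
  set M : ℕ := (verts P).sup (fun v => v.1 + v.2) with hMdef
  have hMle : ∀ v ∈ verts P, v.1 + v.2 ≤ M := fun v hv => Finset.le_sup (f := fun v => v.1 + v.2) hv
  -- the free-vertex case
  have freecase : ∀ v : {v : ℕ × ℕ // v ∈ verts P}, v.1 ∉ P →
      Φ (ψ (MvPolynomial.X v)) = AddMonoidAlgebra.single (W v.1) (1 : K) := by
    intro v hv
    have hf : freeVert P v.1 := ⟨v.2, hv⟩
    rw [hfree v hf, AddMonoidAlgebra.of'_apply, hΦs, hχ]
  have key : ∀ n : ℕ, ∀ v : {v : ℕ × ℕ // v ∈ verts P}, M ≤ v.1.1 + v.1.2 + n →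
      Φ (ψ (MvPolynomial.X v)) = AddMonoidAlgebra.single (W v.1) (1 : K) := by
    intro n
    induction n with
    | zero =>
      intro v hv
      by_cases hvP : v.1 ∈ P
      · exfalso
        have hdm : ((v.1.1 + 1, v.1.2 + 1) : ℕ × ℕ) ∈ verts P :=
          Finset.mem_biUnion.2 ⟨v.1, hvP, by simp [cellVerts]⟩
        have := hMle _ hdm
        simp at this
        omega
      · exact freecase v hvP
    | succ n ih =>
      intro v hv
      by_cases hvP : v.1 ∈ P
      · have hbm : ((v.1.1 + 1, v.1.2) : ℕ × ℕ) ∈ verts P :=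
          Finset.mem_biUnion.2 ⟨v.1, hvP, by simp [cellVerts]⟩
        have hcm : ((v.1.1, v.1.2 + 1) : ℕ × ℕ) ∈ verts P :=
          Finset.mem_biUnion.2 ⟨v.1, hvP, by simp [cellVerts]⟩
        have hdm : ((v.1.1 + 1, v.1.2 + 1) : ℕ × ℕ) ∈ verts P :=
          Finset.mem_biUnion.2 ⟨v.1, hvP, by simp [cellVerts]⟩
        have hrel := hcellrel v ⟨_, hbm⟩ ⟨_, hcm⟩ ⟨_, hdm⟩ hvP rfl rfl rfl
        have hrelΦ := congrArg Φ hrel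
        rw [map_mul, map_mul] at hrelΦ
        have ihb : Φ (ψ (MvPolynomial.X (⟨(v.1.1 + 1, v.1.2), hbm⟩ : {v : ℕ × ℕ // v ∈ verts P})))
            = AddMonoidAlgebra.single (W (v.1.1 + 1, v.1.2)) (1 : K) := ih _ (by simp; omega)
        have ihc : Φ (ψ (MvPolynomial.X (⟨(v.1.1, v.1.2 + 1), hcm⟩ : {v : ℕ × ℕ // v ∈ verts P})))
            = AddMonoidAlgebra.single (W (v.1.1, v.1.2 + 1)) (1 : K) := ih _ (by simp; omega)
        have ihd : Φ (ψ (MvPolynomial.X (⟨(v.1.1 + 1, v.1.2 + 1), hdm⟩ : {v : ℕ × ℕ // v ∈ verts P})))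
            = AddMonoidAlgebra.single (W (v.1.1 + 1, v.1.2 + 1)) (1 : K) := ih _ (by simp; omega)
        rw [ihb, ihc, ihd, AddMonoidAlgebra.single_mul_single, mul_one] at hrelΦ
        have hcw := hWcell v.1 hvP
        have hstep : Φ (ψ (MvPolynomial.X v)) *
            AddMonoidAlgebra.single (W (v.1.1 + 1, v.1.2 + 1)) (1 : K) =
            AddMonoidAlgebra.single (W v.1) (1 : K) *
            AddMonoidAlgebra.single (W (v.1.1 + 1, v.1.2 + 1)) (1 : K) := by
          rw [hrelΦ, AddMonoidAlgebra.single_mul_single, mul_one]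
          congr 1
          omega
        have hne : (AddMonoidAlgebra.single (W (v.1.1 + 1, v.1.2 + 1)) (1 : K)
            : AddMonoidAlgebra K ℤ) ≠ 0 := by
          exact fun h => one_ne_zero (AddMonoidAlgebra.single_eq_zero.1 h)
        exact mul_right_cancel₀ hne hstep
      · exact freecase v hvP
  -- apply everything to the kernel element
  have hker' : ψ (MvPolynomial.X a) * ψ (MvPolynomial.X b) =
      ψ (MvPolynomial.X c) * ψ (MvPolynomial.X d) := by
    have h0 : ψ (MvPolynomial.X a * MvPolynomial.X b - MvPolynomial.X c * MvPolynomial.X d) = 0 :=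
      hker
    rw [map_sub, map_mul, map_mul, sub_eq_zero] at h0
    exact h0
  have hΦk := congrArg Φ hker'
  rw [map_mul, map_mul, key M a (by omega), key M b (by omega), key M c (by omega),
      key M d (by omega), AddMonoidAlgebra.single_mul_single,
      AddMonoidAlgebra.single_mul_single, mul_one] at hΦk
  have hexp : W a.1 + W b.1 = W c.1 + W d.1 :=
    (AddMonoidAlgebra.single_left_inj (one_ne_zero : (1:K) ≠ 0)).1 hΦk
  rw [hc, hd] at hexp
  simp only [hWdef] at hexp
  split_ifs at hexp <;> omega
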